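/- arXiv:2007.06850 — 5 statements merged into one kernel-verified Lean document; each statement's English description precedes it below -/
import Mathlib

section
/- If an opinion aggregation function satisfies narrow unanimity and monotonicity, and its domain is closed under changing all agents' valuations on a single statement to a common constant, then it satisfies sided unanimity. -/
open scoped BigOperators

/-- A directed relational framework: statements `S`, relationships `R`,
each relationship has a set of source statements (`src r s` means `s` is a source of `r`)
and a destination statement `dst r`. -/
structure DRF where
  S : Type
  R : Type
  [fintypeS : Fintype S]
  [fintypeR : Fintype R]
  [deceqS : DecidableEq S]
  src : R → S → Bool
  dst : R → S

attribute [instance] DRF.fintypeS DRF.fintypeR DRF.deceqS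

/-- An opinion: a valuation on statements and an acceptance function on relationships. -/
structure Opinion (D : DRF) where
  v : D.S → ℝ
  w : D.R → ℝ

/-- The set `R⁺(s)` of relationships outgoing from `s`. -/
def DRF.Rplus (D : DRF) (s : D.S) : Finset D.R :=
  Finset.univ.filter (fun r => D.src r s = true)

/-- The estimation function: `v s` when there are no outgoing relationships or the
acceptances sum to `0`, otherwise the `w`-weighted average of `v` over descendants. -/
noncomputable def est {D : DRF} (O : Opinion D) (s : D.S) : ℝ :=
  if (∑ r ∈ D.Rplus s, O.w r) = 0 then O.v s
  else (∑ r ∈ D.Rplus s, O.w r * O.v (D.dst r)) / (∑ r ∈ D.Rplus s, O.w r)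

/-- ε-coherence of an opinion. -/
def Coherent {D : DRF} (ε : ℝ) (O : Opinion D) : Prop :=
  ∀ s : D.S, |O.v s - est O s| < ε

/-- An opinion profile for `n` agents. -/
abbrev Profile (D : DRF) (n : ℕ) := Fin n → Opinion D

/-- Aggregated (direct) valuation: pointwise average. -/
noncomputable def directV {D : DRF} {n : ℕ} (P : Profile D n) (s : D.S) : ℝ :=
  (∑ i, (P i).v s) / n

/-- Aggregated acceptance: pointwise average. -/
noncomputable def directW {D : DRF} {n : ℕ} (P : Profile D n) (r : D.R) : ℝ :=
  (∑ i, (P i).w r) / n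

/-- The direct aggregation function. -/
noncomputable def direct {D : DRF} {n : ℕ} (P : Profile D n) : Opinion D :=
  ⟨directV P, directW P⟩

/-- Aggregated (indirect) valuation: average of individual estimations. -/
noncomputable def indirectV {D : DRF} {n : ℕ} (P : Profile D n) (s : D.S) : ℝ :=
  (∑ i, est (P i) s) / n

/-- The indirect aggregation function. -/
noncomputable def indirect {D : DRF} {n : ℕ} (P : Profile D n) : Opinion D :=
  ⟨indirectV P, directW P⟩

/-- Replace an opinion's valuation on a single statement by a constant. -/
noncomputable def updOp {D : DRF} (O : Opinion D) (s : D.S) (lam : ℝ) : Opinion D :=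
  ⟨Function.update O.v s lam, O.w⟩

/-- Narrow unanimity and monotonicity, with a domain closed under setting all agents'
valuations on a single statement to a common constant, imply sided unanimity. -/
theorem narrow_unanimity_and_monotonicity_imply_sided_unanimity
    (D : DRF) (n : ℕ) (Dom : Set (Profile D n)) (F : Profile D n → Opinion D)
    (hNU : ∀ P ∈ Dom, ∀ s : D.S, ∀ lam : ℝ, (∀ i, (P i).v s = lam) → (F P).v s = lam)
    (hM : ∀ P ∈ Dom, ∀ P' ∈ Dom, ∀ s : D.S,
      (∀ i, (P i).v s ≤ (P' i).v s) → (F P).v s ≤ (F P').v s)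
    (hClosed : ∀ P ∈ Dom, ∀ s : D.S, ∀ lam : ℝ,
      (fun i => updOp (P i) s lam) ∈ Dom) :
    ∀ P ∈ Dom, ∀ s : D.S,
      ((∀ i, 0 < (P i).v s) → 0 < (F P).v s) ∧
      ((∀ i, (P i).v s < 0) → (F P).v s < 0) := by
  intro P hP s
  rcases Nat.eq_zero_or_pos n with hn | hn
  · subst hn
    have h0 : (F P).v s = 0 := hNU P hP s 0 (fun i => i.elim0)
    have h1 : (F P).v s = 1 := hNU P hP s 1 (fun i => i.elim0)
    exact absurd (h0 ▸ h1) (by norm_num)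
  · have hne : (Finset.univ : Finset (Fin n)).Nonempty := by
      simpa [Finset.univ_nonempty_iff] using Fin.pos_iff_nonempty.mp hn
    constructor
    · intro hpos
      set lam := Finset.univ.inf' hne (fun i => (P i).v s) with hlam
      have hlampos : 0 < lam := by
        rw [hlam, Finset.lt_inf'_iff]
        exact fun i _ => hpos i
      set P' := fun i => updOp (P i) s lam with hP'
      have hP'mem : P' ∈ Dom := hClosed P hP s lam
      have hval : ∀ i, (P' i).v s = lam := by
        intro i; simp [hP', updOp]
      have hFP' : (F P').v s = lam := hNU P' hP'mem s lam hval
      have hle : (F P').v s ≤ (F P).v s := by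
        apply hM P' hP'mem P hP s
        intro i
        rw [hval i, hlam]
        exact Finset.inf'_le _ (Finset.mem_univ i)
      linarith [hFP' ▸ hle]
    · intro hneg
      set lam := Finset.univ.sup' hne (fun i => (P i).v s) with hlam
      have hlamneg : lam < 0 := by
        rw [hlam, Finset.sup'_lt_iff]
        exact fun i _ => hneg i
      set P' := fun i => updOp (P i) s lam with hP'
      have hP'mem : P' ∈ Dom := hClosed P hP s lam
      have hval : ∀ i, (P' i).v s = lam := by
        intro i; simp [hP', updOp]
      have hFP' : (F P').v s = lam := hNU P' hP'mem s lam hval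
      have hle : (F P).v s ≤ (F P').v s := by
        apply hM P hP P' hP'mem s
        intro i
        rw [hval i, hlam]
        exact Finset.le_sup' (fun i => (P i).v s) (Finset.mem_univ i)
      linarith [hFP' ▸ hle]
end

section
/- For the α-recursive aggregation R_α = αD + (1-α)R, the coherence gap at each statement satisfies v_{R_α(P)}(s) - e_{R_α(P)}(s) = α·(v_{D(P)}(s) - e_{D(P)}(s)); consequently, since |v_{D(P)}(s) - e_{D(P)}(s)| ≤ 2 (valuations lie in [-1,1]), R_α satisfies ε-collective coherence whenever α < ε/2. -/
open scoped BigOperators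

/-- The coherence gap of the α-recursive aggregation equals α times the gap of the
direct aggregation; hence `R_α` is ε-collectively coherent whenever `α < ε/2`. -/
theorem alpha_recursive_coherence_gap
    (D : DRF) (n : ℕ) (hn : 0 < n) (P : Profile D n)
    (hv : ∀ i s, (P i).v s ∈ Set.Icc (-1 : ℝ) 1)
    (hw : ∀ i r, 0 ≤ (P i).w r)
    (wbar : D.R → ℝ) (hwbar : ∀ r, wbar r = (∑ i, (P i).w r) / n)
    (hpos : ∀ s : D.S, (D.Rplus s).Nonempty → 0 < ∑ r ∈ D.Rplus s, wbar r)
    (vD : D.S → ℝ) (hvD : ∀ s, vD s = (∑ i, (P i).v s) / n)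
    (vR : D.S → ℝ)
    (hleaf : ∀ s : D.S, D.Rplus s = ∅ → vR s = vD s)
    (hrec : ∀ s : D.S, (D.Rplus s).Nonempty →
      vR s = (∑ r ∈ D.Rplus s, wbar r * vR (D.dst r)) / (∑ r ∈ D.Rplus s, wbar r))
    (α : ℝ) (hα : α ∈ Set.Icc (0 : ℝ) 1) :
    (∀ s : D.S,
      (α * vD s + (1 - α) * vR s) -
          est (⟨fun t => α * vD t + (1 - α) * vR t, wbar⟩ : Opinion D) s =
        α * (vD s - est (⟨vD, wbar⟩ : Opinion D) s)) ∧
    (∀ ε ∈ Set.Ioo (0 : ℝ) 1, α < ε / 2 →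
      ∀ s : D.S,
        |(α * vD s + (1 - α) * vR s) -
            est (⟨fun t => α * vD t + (1 - α) * vR t, wbar⟩ : Opinion D) s| < ε) := by

  obtain ⟨hα0, hα1⟩ := hα
  have hnpos : (0:ℝ) < n := by exact_mod_cast hn
  have hwnn : ∀ r, 0 ≤ wbar r := fun r => by
    rw [hwbar]
    exact div_nonneg (Finset.sum_nonneg fun i _ => hw i r) (Nat.cast_nonneg n)
  have hvDmem : ∀ s, vD s ∈ Set.Icc (-1:ℝ) 1 := by
    intro s; rw [hvD]
    constructor
    · rw [le_div_iff₀ hnpos]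
      calc (-1:ℝ) * n = ∑ _i : Fin n, (-1:ℝ) := by
            simp [Finset.sum_const, nsmul_eq_mul, mul_comm]
        _ ≤ _ := Finset.sum_le_sum fun i _ => (hv i s).1
    · rw [div_le_iff₀ hnpos]
      calc (∑ i, (P i).v s) ≤ ∑ _i : Fin n, (1:ℝ) :=
            Finset.sum_le_sum fun i _ => (hv i s).2
        _ = 1 * n := by simp [Finset.sum_const, nsmul_eq_mul, mul_comm]
  have hest : ∀ s, est (⟨vD, wbar⟩ : Opinion D) s ∈ Set.Icc (-1:ℝ) 1 := by
    intro s
    by_cases hW : (∑ r ∈ D.Rplus s, wbar r) = 0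
    · simpa [est, hW] using hvDmem s
    · have hWpos : 0 < ∑ r ∈ D.Rplus s, wbar r :=
        lt_of_le_of_ne (Finset.sum_nonneg fun r _ => hwnn r) (Ne.symm hW)
      simp only [est, hW, if_false]
      constructor
      · rw [le_div_iff₀ hWpos]
        calc (-1) * (∑ r ∈ D.Rplus s, wbar r) = ∑ r ∈ D.Rplus s, wbar r * (-1) := by
              rw [Finset.mul_sum]; congr 1; ext r; ring
          _ ≤ _ := Finset.sum_le_sum fun r _ =>
              mul_le_mul_of_nonneg_left (hvDmem (D.dst r)).1 (hwnn r)
      · rw [div_le_iff₀ hWpos]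
        calc (∑ r ∈ D.Rplus s, wbar r * vD (D.dst r))
            ≤ ∑ r ∈ D.Rplus s, wbar r * 1 := Finset.sum_le_sum fun r _ =>
              mul_le_mul_of_nonneg_left (hvDmem (D.dst r)).2 (hwnn r)
          _ = 1 * (∑ r ∈ D.Rplus s, wbar r) := by
              rw [Finset.mul_sum]; congr 1; ext r; ring
  have key : ∀ s : D.S,
      (α * vD s + (1 - α) * vR s) -
          est (⟨fun t => α * vD t + (1 - α) * vR t, wbar⟩ : Opinion D) s =
        α * (vD s - est (⟨vD, wbar⟩ : Opinion D) s) := by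
    intro s
    by_cases hW : (∑ r ∈ D.Rplus s, wbar r) = 0
    · have hempty : D.Rplus s = ∅ := by
        by_contra h
        exact (hpos s (Finset.nonempty_of_ne_empty h)).ne' hW
      have hvr := hleaf s hempty
      simp only [est, hW, if_true, if_pos rfl]
      rw [hvr]; ring
    · have hne : (D.Rplus s).Nonempty := by
        rcases Finset.eq_empty_or_nonempty (D.Rplus s) with h | h
        · exact absurd (by simp [h]) hW
        · exact h
      have hv' := hrec s hne
      simp only [est, hW, if_false]
      have hsum : ∑ r ∈ D.Rplus s, wbar r * (α * vD (D.dst r) + (1 - α) * vR (D.dst r))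
          = α * (∑ r ∈ D.Rplus s, wbar r * vD (D.dst r))
            + (1 - α) * (∑ r ∈ D.Rplus s, wbar r * vR (D.dst r)) := by
        rw [Finset.mul_sum, Finset.mul_sum, ← Finset.sum_add_distrib]
        congr 1; ext r; ring
      rw [hsum, hv']
      field_simp
      ring
  refine ⟨key, ?_⟩
  intro ε hε hαε s
  rw [key s, abs_mul, abs_of_nonneg hα0]
  have h2 : |vD s - est (⟨vD, wbar⟩ : Opinion D) s| ≤ 2 := by
    have h1 := hvDmem s
    have h3 := hest s
    rw [abs_sub_le_iff]
    constructor <;> [linarith [h1.2, h3.1]; linarith [h1.1, h3.2]]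
  calc α * |vD s - est (⟨vD, wbar⟩ : Opinion D) s| ≤ α * 2 :=
        mul_le_mul_of_nonneg_left h2 hα0
    _ < ε := by linarith
end

section
/- Assume every agent's opinion is ε-coherent for some ε ∈ (0,1). Then the direct aggregation D satisfies endorsed unanimity: if every agent assigns valuation 1 to every descendant of a statement s (with s having at least one descendant and each agent's acceptance sum over R⁺(s) positive), then each agent's estimation e_i(s) = 1, the ε-coherence forces v_i(s) > 1 - ε > 0 for every agent i, and hence v_{D(P)}(s) = (1/n)Σ_i v_i(s) > 0; symmetrically, full negative support yields v_{D(P)}(s) < 0. -/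
open scoped BigOperators

/-- Under ε-coherent individual opinions, the direct aggregation satisfies
endorsed unanimity. -/
theorem direct_endorsed_unanimity_of_coherent
    (D : DRF) (n : ℕ) (hn : 0 < n) (ε : ℝ) (hε : ε ∈ Set.Ioo (0 : ℝ) 1)
    (P : Profile D n) (hcoh : ∀ i, Coherent ε (P i)) (s : D.S)
    (hne : (D.Rplus s).Nonempty)
    (hpos : ∀ i, 0 < ∑ r ∈ D.Rplus s, (P i).w r) :
    ((∀ i, ∀ r ∈ D.Rplus s, (P i).v (D.dst r) = 1) → 0 < directV P s) ∧
    ((∀ i, ∀ r ∈ D.Rplus s, (P i).v (D.dst r) = -1) → directV P s < 0) := by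
  obtain ⟨hε0, hε1⟩ := hε
  have hest : ∀ (c : ℝ) i, (∀ r ∈ D.Rplus s, (P i).v (D.dst r) = c) → est (P i) s = c := by
    intro c i h
    have hw := hpos i
    unfold est
    rw [if_neg (ne_of_gt hw)]
    rw [Finset.sum_congr rfl (fun r hr => by rw [h r hr])]
    rw [← Finset.sum_mul, mul_comm, mul_div_assoc, div_self (ne_of_gt hw), mul_one]
  constructor
  · intro h
    have hv : ∀ i, 0 < (P i).v s := by
      intro i
      have hc := hcoh i s
      rw [hest 1 i (h i)] at hc
      have := abs_lt.mp hc
      linarith [this.1]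
    have : 0 < ∑ i, (P i).v s := Finset.sum_pos (fun i _ => hv i) ⟨⟨0, hn⟩, Finset.mem_univ _⟩
    exact div_pos this (by exact_mod_cast hn)
  · intro h
    have hv : ∀ i, (P i).v s < 0 := by
      intro i
      have hc := hcoh i s
      rw [hest (-1) i (h i)] at hc
      have := abs_lt.mp hc
      linarith [this.2]
    have : ∑ i, (P i).v s < 0 := Finset.sum_neg (fun i _ => hv i) ⟨⟨0, hn⟩, Finset.mem_univ _⟩
    exact div_neg_of_neg_of_pos this (by exact_mod_cast hn)
end

section
/- Assume all agents share a common acceptance function (w_i(r) = λ_r > 0 for all agents i and each relationship r), and every agent's opinion is δ-coherent for some 0 < δ ≤ ε < 1. Then the direct aggregation D produces an ε-coherent collective opinion: for every statement s, |v_{D(P)}(s) - e_{D(P)}(s)| ≤ (1/n)Σ_i |v_i(s) - e_i(s)| < δ ≤ ε, using that with common acceptances, the estimation of the average equals the average of the individual estimations. -/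
open scoped BigOperators

/-- With a common positive acceptance function and δ-coherent individual opinions
(0 < δ ≤ ε < 1), the direct aggregation produces an ε-coherent collective opinion. -/
theorem direct_collective_coherence_common_acceptance
    (D : DRF) (n : ℕ) (hn : 0 < n) (P : Profile D n)
    (lam : D.R → ℝ) (hlam : ∀ r, 0 < lam r)
    (hcommon : ∀ i r, (P i).w r = lam r)
    (δ ε : ℝ) (hδ : 0 < δ) (hδε : δ ≤ ε) (hε1 : ε < 1)
    (hcoh : ∀ i, Coherent δ (P i)) :
    Coherent ε (direct P) := by
  intro s
  have hε : 0 < ε := lt_of_lt_of_le hδ hδε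
  have hn' : (0:ℝ) < n := by exact_mod_cast hn
  have hw : ∀ r, directW P r = lam r := by
    intro r
    simp only [directW]
    rw [Finset.sum_congr rfl (fun i _ => hcommon i r)]
    rw [Finset.sum_const, Finset.card_univ, Fintype.card_fin, nsmul_eq_mul]
    field_simp
  have hsum : (∑ r ∈ D.Rplus s, (direct P).w r) = ∑ r ∈ D.Rplus s, lam r :=
    Finset.sum_congr rfl (fun r _ => hw r)
  by_cases h0 : (∑ r ∈ D.Rplus s, lam r) = 0
  · have : est (direct P) s = (direct P).v s := by
      simp [est, hsum, h0]
    rw [this]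
    simpa using hε
  · have hW : (0:ℝ) < ∑ r ∈ D.Rplus s, lam r := by
      rcases lt_or_eq_of_le (Finset.sum_nonneg (fun r _ => (hlam r).le)) with h | h
      · exact h
      · exact absurd h.symm h0
    set W := ∑ r ∈ D.Rplus s, lam r with hWdef
    have hesti : ∀ i, est (P i) s = (∑ r ∈ D.Rplus s, lam r * (P i).v (D.dst r)) / W := by
      intro i
      have h1 : (∑ r ∈ D.Rplus s, (P i).w r) = W :=
        Finset.sum_congr rfl (fun r _ => hcommon i r)
      have h2 : (∑ r ∈ D.Rplus s, (P i).w r * (P i).v (D.dst r))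
          = ∑ r ∈ D.Rplus s, lam r * (P i).v (D.dst r) :=
        Finset.sum_congr rfl (fun r _ => by rw [hcommon i r])
      simp [est, h1, h2, h0]
    have hestD : est (direct P) s = (∑ i, est (P i) s) / n := by
      have h2 : (∑ r ∈ D.Rplus s, (direct P).w r * (direct P).v (D.dst r))
          = (∑ i, ∑ r ∈ D.Rplus s, lam r * (P i).v (D.dst r)) / n := by
        rw [show (∑ i, ∑ r ∈ D.Rplus s, lam r * (P i).v (D.dst r))
              = ∑ r ∈ D.Rplus s, ∑ i, lam r * (P i).v (D.dst r) from Finset.sum_comm,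
           Finset.sum_div]
        refine Finset.sum_congr rfl (fun r _ => ?_)
        show directW P r * directV P (D.dst r) = _
        rw [hw r, directV, ← Finset.mul_sum, mul_div_assoc]
      have h3 : (∑ i, est (P i) s) = (∑ i, ∑ r ∈ D.Rplus s, lam r * (P i).v (D.dst r)) / W := by
        rw [Finset.sum_div]
        exact Finset.sum_congr rfl (fun i _ => hesti i)
      rw [show est (direct P) s
            = (∑ r ∈ D.Rplus s, (direct P).w r * (direct P).v (D.dst r)) / W from by
          simp [est, hsum, h0], h2, h3, div_div, div_div, mul_comm]
    have hdV : (direct P).v s = (∑ i, (P i).v s) / n := rfl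
    have key : (direct P).v s - est (direct P) s
        = (∑ i, ((P i).v s - est (P i) s)) / n := by
      rw [hdV, hestD, Finset.sum_sub_distrib, sub_div]
    rw [key]
    rw [abs_div, abs_of_pos hn']
    rw [div_lt_iff₀ hn']
    calc |∑ i, ((P i).v s - est (P i) s)| ≤ ∑ i, |(P i).v s - est (P i) s| :=
          Finset.abs_sum_le_sum_abs _ _
      _ < ∑ _i : Fin n, δ := by
          refine Finset.sum_lt_sum_of_nonempty ?_ (fun i _ => hcoh i s)
          exact Finset.univ_nonempty_iff.mpr ⟨⟨0, hn⟩⟩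
      _ = n * δ := by simp [mul_comm]
      _ ≤ ε * n := by
          rw [mul_comm (ε : ℝ)]
          exact mul_le_mul_of_nonneg_left hδε hn'.le
end

section
/- Assume all agents share a common acceptance function (w_i(r) = λ_r > 0 for all i and all r), and every agent's opinion is δ-coherent for some 0 < δ ≤ ε < 1. Then the indirect aggregation I produces an ε-coherent collective opinion: for every statement s, |v_{I(P)}(s) - e_{I(P)}(s)| ≤ (1/n)Σ_i Σ_{r∈R⁺(s)} [w_i(r)·|v_i(s_r) - e_i(s_r)|] / Σ_{r∈R⁺(s)} w_i(r) < δ ≤ ε. -/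
open scoped BigOperators

/-- With a common positive acceptance function and δ-coherent individual opinions
(0 < δ ≤ ε < 1), the indirect aggregation produces an ε-coherent collective opinion. -/
theorem indirect_collective_coherence_common_acceptance
    (D : DRF) (n : ℕ) (hn : 0 < n) (P : Profile D n)
    (lam : D.R → ℝ) (hlam : ∀ r, 0 < lam r)
    (hcommon : ∀ i r, (P i).w r = lam r)
    (δ ε : ℝ) (hδ : 0 < δ) (hδε : δ ≤ ε) (hε1 : ε < 1)
    (hcoh : ∀ i, Coherent δ (P i)) :
    Coherent ε (indirect P) := by
  have hε : 0 < ε := lt_of_lt_of_le hδ hδε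
  have hn' : (0:ℝ) < n := Nat.cast_pos.mpr hn
  intro s
  by_cases hAe : D.Rplus s = ∅
  · have h1 : (∑ r ∈ D.Rplus s, (indirect P).w r) = 0 := by rw [hAe]; simp
    have h2 : est (indirect P) s = (indirect P).v s := by rw [est, if_pos h1]
    rw [h2]; simpa using hε
  · have hAne : (D.Rplus s).Nonempty := Finset.nonempty_iff_ne_empty.mpr hAe
    set A := D.Rplus s with hA
    have hW : 0 < ∑ r ∈ A, lam r := Finset.sum_pos (fun r _ => hlam r) hAne
    set W := ∑ r ∈ A, lam r with hWdef
    have hwI : ∀ r, (indirect P).w r = lam r := by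
      intro r
      show directW P r = lam r
      unfold directW
      rw [Finset.sum_congr rfl (fun i _ => hcommon i r), Finset.sum_const,
        Finset.card_univ, Fintype.card_fin, nsmul_eq_mul,
        mul_div_cancel_left₀ _ hn'.ne']
    have hOsum : ∀ (O : Opinion D), (∀ r, O.w r = lam r) → (∑ r ∈ A, O.w r) = W := by
      intro O hO
      exact Finset.sum_congr rfl (fun r _ => hO r)
    have estf : ∀ (O : Opinion D), (∀ r, O.w r = lam r) →
        est O s = (∑ r ∈ A, lam r * O.v (D.dst r)) / W := by
      intro O hO
      rw [est]
      simp only [← hA]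
      rw [hOsum O hO, if_neg hW.ne',
        Finset.sum_congr rfl (fun r (_ : r ∈ A) => by rw [hO r])]
    have key : ∀ i, |est (P i) s - (∑ r ∈ A, lam r * est (P i) (D.dst r)) / W| < δ := by
      intro i
      rw [estf (P i) (hcommon i), div_sub_div_same, ← Finset.sum_sub_distrib,
        Finset.sum_congr rfl (fun r (_ : r ∈ A) =>
          (mul_sub (lam r) ((P i).v (D.dst r)) (est (P i) (D.dst r))).symm),
        abs_div, abs_of_pos hW, div_lt_iff₀ hW]
      calc |∑ r ∈ A, lam r * ((P i).v (D.dst r) - est (P i) (D.dst r))|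
          ≤ ∑ r ∈ A, |lam r * ((P i).v (D.dst r) - est (P i) (D.dst r))| :=
            Finset.abs_sum_le_sum_abs _ _
        _ = ∑ r ∈ A, lam r * |(P i).v (D.dst r) - est (P i) (D.dst r)| := by
            refine Finset.sum_congr rfl (fun r _ => ?_)
            rw [abs_mul, abs_of_pos (hlam r)]
        _ < ∑ r ∈ A, lam r * δ :=
            Finset.sum_lt_sum_of_nonempty hAne (fun r _ =>
              mul_lt_mul_of_pos_left (hcoh i (D.dst r)) (hlam r))
        _ = δ * W := by rw [← Finset.sum_mul, hWdef]; ring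
    have hmain : (indirect P).v s - est (indirect P) s
        = (∑ i, (est (P i) s - (∑ r ∈ A, lam r * est (P i) (D.dst r)) / W)) / n := by
      rw [estf (indirect P) hwI]
      show indirectV P s - _ = _
      unfold indirectV indirect
      simp only [Finset.sum_sub_distrib, sub_div]
      congr 1
      have hterm : ∀ r ∈ A, lam r * indirectV P (D.dst r)
          = (∑ i, lam r * est (P i) (D.dst r)) / n := by
        intro r _
        unfold indirectV
        rw [← mul_div_assoc, Finset.mul_sum]
      rw [Finset.sum_congr rfl hterm, ← Finset.sum_div, div_div,
        Finset.sum_comm, ← Finset.sum_div, div_div, mul_comm (n:ℝ) W]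
    have hne : (Finset.univ : Finset (Fin n)).Nonempty :=
      ⟨⟨0, hn⟩, Finset.mem_univ _⟩
    rw [hmain, abs_div, abs_of_pos hn', div_lt_iff₀ hn']
    calc |∑ i, (est (P i) s - (∑ r ∈ A, lam r * est (P i) (D.dst r)) / W)|
        ≤ ∑ i, |est (P i) s - (∑ r ∈ A, lam r * est (P i) (D.dst r)) / W| :=
          Finset.abs_sum_le_sum_abs _ _
      _ < ∑ _i : Fin n, δ := Finset.sum_lt_sum_of_nonempty hne (fun i _ => key i)
      _ = n * δ := by rw [Finset.sum_const, Finset.card_univ, Fintype.card_fin, nsmul_eq_mul]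
      _ ≤ ε * n := by rw [mul_comm]; exact mul_le_mul_of_nonneg_right hδε hn'.le
end
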